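/- arXiv:1801.05710 — 3 statements merged into one kernel-verified Lean document; each statement's English description precedes it below -/
import Mathlib

section
/- Let f : E × ℝ₊ → ℝ₊ be of the form f(x,γ) = ⟨g(x), Ẽ[Λ̃(x,γ,ω̃)]⟩ where g : E → ℝ₊^l is locally bounded, Λ̃ ≥ 0 is measurable on E × ℝ₊ × Ω̃ with sup_i Ẽ[sup_x sup_{γ∈(0,γ̄]} Λ̃_i(x,γ,·)] < ∞, and for each i, P̃-a.s.: (i) for every compact K ⊂ E, lim_{γ→0} sup_{x∈K} Λ̃_i(x,γ,ω̃) = 0, and (ii) there is a measurable γ̲(ω̃) ∈ (0,γ̄] with lim_{x→∞} sup_{γ≤γ̲(ω̃)} Λ̃_i(x,γ,ω̃) = 0. Let (x̄_n) ⊂ E and weights η̃_k > 0 with H_n = ∑_{k≤n} η̃_k → ∞, and assume sup_i sup_n (1/H_n) ∑_{k=1}^n η̃_k g_i(x̄_{k−1}) < ∞ and γ_n → 0. Then lim_{n→∞} (1/H_n) ∑_{k=1}^n η̃_k f(x̄_{k−1}, γ_k) = 0. -/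
open MeasureTheory Filter

lemma cesaro_aux (η : ℕ → ℝ) (hη : ∀ n, 0 < η n) (H : ℕ → ℝ)
    (hH : ∀ n, H n = ∑ k ∈ Finset.range n, η k)
    (hHtop : Tendsto H atTop atTop)
    (b c : ℕ → ℝ) (hb : ∀ k, 0 ≤ b k) (hc : ∀ k, 0 ≤ c k)
    (C : ℝ) (hC : ∀ n, (1 / H n) * ∑ k ∈ Finset.range n, η k * b k ≤ C)
    (hc0 : Tendsto c atTop (nhds 0)) :
    Tendsto (fun n => (1 / H n) * ∑ k ∈ Finset.range n, η k * (b k * c k))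
      atTop (nhds 0) := by
  have hHpos : ∀ n, 1 ≤ n → 0 < H n := by
    intro n hn
    rw [hH]
    exact Finset.sum_pos (fun k _ => hη k) (by simp [Finset.nonempty_range_iff]; omega)
  have hC0 : 0 ≤ C := by
    have h1 := hC 1
    have h2 : 0 ≤ (1 / H 1) * ∑ k ∈ Finset.range 1, η k * b k := by
      apply mul_nonneg (one_div_nonneg.2 (hHpos 1 le_rfl).le)
      exact Finset.sum_nonneg fun k _ => mul_nonneg (hη k).le (hb k)
    linarith
  rw [Metric.tendsto_atTop]
  intro ε hε
  set ε' := ε / (2 * (C + 1)) with hε'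
  have hε'pos : 0 < ε' := by positivity
  obtain ⟨N, hN⟩ := (Metric.tendsto_atTop.1 hc0) ε' hε'pos
  have hcN : ∀ k, N ≤ k → c k ≤ ε' := by
    intro k hk
    have := hN k hk
    rw [Real.dist_eq, sub_zero, abs_of_nonneg (hc k)] at this
    linarith
  set D := ∑ k ∈ Finset.range N, η k * (b k * c k) with hD
  have hD0 : 0 ≤ D :=
    Finset.sum_nonneg fun k _ => mul_nonneg (hη k).le (mul_nonneg (hb k) (hc k))
  obtain ⟨N2, hN2⟩ := Filter.eventually_atTop.1 (hHtop.eventually_ge_atTop (max 1 (2 * D / ε)))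
  refine ⟨max N N2, fun n hn => ?_⟩
  have hnN : N ≤ n := le_trans (le_max_left _ _) hn
  have hmax := hN2 n (le_trans (le_max_right _ _) hn)
  have hHn1 : (1 : ℝ) ≤ H n := le_trans (le_max_left _ _) hmax
  have hHnD : 2 * D / ε ≤ H n := le_trans (le_max_right _ _) hmax
  have hHn : 0 < H n := lt_of_lt_of_le one_pos hHn1
  have hsplit : ∑ k ∈ Finset.range n, η k * (b k * c k)
      = D + ∑ k ∈ Finset.Ico N n, η k * (b k * c k) := by
    rw [hD, Finset.range_eq_Ico, ← Finset.sum_Ico_consecutive _ (Nat.zero_le N) hnN, Finset.range_eq_Ico]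
  have htail : ∑ k ∈ Finset.Ico N n, η k * (b k * c k)
      ≤ ε' * ∑ k ∈ Finset.range n, η k * b k := by
    calc ∑ k ∈ Finset.Ico N n, η k * (b k * c k)
        ≤ ∑ k ∈ Finset.Ico N n, η k * b k * ε' := by
          apply Finset.sum_le_sum
          intro k hk
          have hkN : N ≤ k := (Finset.mem_Ico.1 hk).1
          have h1 : c k ≤ ε' := hcN k hkN
          have h2 : 0 ≤ η k * b k := mul_nonneg (hη k).le (hb k)
          nlinarith
      _ = ε' * ∑ k ∈ Finset.Ico N n, η k * b k := by rw [← Finset.sum_mul, mul_comm]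
      _ ≤ ε' * ∑ k ∈ Finset.range n, η k * b k := by
          apply mul_le_mul_of_nonneg_left _ hε'pos.le
          apply Finset.sum_le_sum_of_subset_of_nonneg
          · rw [Finset.range_eq_Ico]
            exact Finset.Ico_subset_Ico (Nat.zero_le N) le_rfl
          · exact fun k _ _ => mul_nonneg (hη k).le (hb k)
  have hSb : ∑ k ∈ Finset.range n, η k * b k ≤ C * H n := by
    calc ∑ k ∈ Finset.range n, η k * b k
        = H n * ((1 / H n) * ∑ k ∈ Finset.range n, η k * b k) := by
          field_simp
      _ ≤ H n * C := mul_le_mul_of_nonneg_left (hC n) hHn.le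
      _ = C * H n := mul_comm _ _
  have hval : (1 / H n) * ∑ k ∈ Finset.range n, η k * (b k * c k)
      ≤ D / H n + ε' * C := by
    rw [hsplit, mul_add]
    have t1 : (1 / H n) * D = D / H n := by ring
    have t2 : (1 / H n) * (∑ k ∈ Finset.Ico N n, η k * (b k * c k))
        ≤ (1 / H n) * (ε' * (C * H n)) := by
      apply mul_le_mul_of_nonneg_left _ (by positivity)
      exact le_trans htail (mul_le_mul_of_nonneg_left hSb hε'pos.le)
    have t3 : (1 / H n) * (ε' * (C * H n)) = ε' * C := by field_simp
    linarith
  have hDHn : D / H n ≤ ε / 2 := by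
    rw [div_le_iff₀ hHn]
    have h1 : (ε / 2) * (2 * D / ε) = D := by field_simp
    nlinarith
  have hεC : ε' * C < ε / 2 := by
    rw [hε', div_mul_eq_mul_div, div_lt_div_iff₀ (by positivity) (by norm_num : (0:ℝ) < 2)]
    nlinarith
  have hnonneg : 0 ≤ (1 / H n) * ∑ k ∈ Finset.range n, η k * (b k * c k) := by
    apply mul_nonneg (by positivity)
    exact Finset.sum_nonneg fun k _ => mul_nonneg (hη k).le (mul_nonneg (hb k) (hc k))
  rw [Real.dist_eq, sub_zero, abs_of_nonneg hnonneg]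
  linarith

/-- Vanishing of weighted empirical averages of remainders
`f(x,γ) = ⟨g(x), Ẽ[Λ̃(x,γ,·)]⟩` along a sequence, under local boundedness of `g`,
uniform integrable domination of `Λ̃`, local-uniform vanishing as `γ → 0`, and
vanishing at infinity for small steps. -/
theorem weighted_remainder_vanishes {E Ω' : Type*} [MetricSpace E]
    [LocallyCompactSpace E] [TopologicalSpace.SeparableSpace E]
    {mΩ : MeasurableSpace Ω'} (μt : Measure Ω') [IsProbabilityMeasure μt]
    (l : ℕ) (hl : 0 < l)
    (g : E → Fin l → ℝ) (hg0 : ∀ x i, 0 ≤ g x i)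
    (hgloc : ∀ K : Set E, IsCompact K → ∃ C, ∀ x ∈ K, ∀ i, g x i ≤ C)
    (γbar : ℝ) (hγbar : 0 < γbar)
    (Λ : E → ℝ → Ω' → Fin l → ℝ) (hΛ0 : ∀ x γ' ω i, 0 ≤ Λ x γ' ω i)
    (hΛint : ∀ x γ' i, Integrable (fun ω => Λ x γ' ω i) μt)
    (hdom : ∀ i, ∃ B : Ω' → ℝ, Integrable B μt ∧
      ∀ x, ∀ γ' ∈ Set.Ioc (0 : ℝ) γbar, ∀ ω, Λ x γ' ω i ≤ B ω)
    (γlow : Ω' → ℝ) (hγlowmeas : Measurable γlow)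
    (hγlowmem : ∀ ω, γlow ω ∈ Set.Ioc (0 : ℝ) γbar)
    (hi : ∀ᵐ ω ∂μt, ∀ i, ∀ K : Set E, IsCompact K → ∀ ε > 0, ∃ δ > 0,
      ∀ γ' ∈ Set.Ioc (0 : ℝ) δ, ∀ x ∈ K, Λ x γ' ω i ≤ ε)
    (hii : ∀ᵐ ω ∂μt, ∀ i, ∀ ε > 0, ∃ K : Set E, IsCompact K ∧
      ∀ x ∉ K, ∀ γ' ∈ Set.Ioc (0 : ℝ) (γlow ω), Λ x γ' ω i ≤ ε)
    (xb : ℕ → E) (η : ℕ → ℝ) (hηpos : ∀ n, 0 < η n)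
    (H : ℕ → ℝ) (hH : ∀ n, H n = ∑ k ∈ Finset.range n, η k)
    (hHtop : Tendsto H atTop atTop)
    (hsup : ∃ C, ∀ i, ∀ n,
      (1 / H n) * ∑ k ∈ Finset.range n, η k * g (xb k) i ≤ C)
    (γ : ℕ → ℝ) (hγpos : ∀ n, 0 < γ n) (hγle : ∀ n, γ n ≤ γbar)
    (hγ0 : Tendsto γ atTop (nhds 0)) :
    Tendsto (fun n => (1 / H n) * ∑ k ∈ Finset.range n,
        η k * ∑ i, g (xb k) i * ∫ ω, Λ (xb k) (γ k) ω i ∂μt)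
      atTop (nhds 0) := by
  obtain ⟨C, hC⟩ := hsup
  -- Step 1: for each i, the integral tends to 0 by dominated convergence.
  have hint0 : ∀ i : Fin l,
      Tendsto (fun k => ∫ ω, Λ (xb k) (γ k) ω i ∂μt) atTop (nhds 0) := by
    intro i
    obtain ⟨B, hBint, hBle⟩ := hdom i
    have key := MeasureTheory.tendsto_integral_of_dominated_convergence
      (F := fun k ω => Λ (xb k) (γ k) ω i) (f := fun _ => (0 : ℝ)) (μ := μt) B
      (fun k => (hΛint (xb k) (γ k) i).aestronglyMeasurable) hBint
      ?_ ?_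
    · simpa using key
    · intro k
      filter_upwards with ω
      rw [Real.norm_eq_abs, abs_of_nonneg (hΛ0 _ _ _ _)]
      exact hBle (xb k) (γ k) ⟨hγpos k, hγle k⟩ ω
    · filter_upwards [hi, hii] with ω h1 h2
      rw [Metric.tendsto_atTop]
      intro ε hε
      obtain ⟨K, hK, hKout⟩ := h2 i (ε / 2) (by positivity)
      obtain ⟨δ, hδpos, hδin⟩ := h1 i K hK (ε / 2) (by positivity)
      have hγlω := hγlowmem ω
      set δ' := min δ (γlow ω) with hδ'
      have hδ'pos : 0 < δ' := lt_min hδpos hγlω.1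
      obtain ⟨N, hN⟩ := Filter.eventually_atTop.1 (hγ0.eventually_lt_const hδ'pos)
      refine ⟨N, fun k hk => ?_⟩
      have hγk : γ k ≤ δ' := (hN k hk).le
      have hΛle : Λ (xb k) (γ k) ω i ≤ ε / 2 := by
        by_cases hx : xb k ∈ K
        · exact hδin (γ k) ⟨hγpos k, le_trans hγk (min_le_left _ _)⟩ (xb k) hx
        · exact hKout (xb k) hx (γ k) ⟨hγpos k, le_trans hγk (min_le_right _ _)⟩
      rw [Real.dist_eq, sub_zero, abs_of_nonneg (hΛ0 _ _ _ _)]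
      linarith
  -- Step 2: swap sums and apply the Cesàro lemma coordinatewise.
  have hmain : Tendsto (fun n => ∑ i : Fin l, (1 / H n) *
      ∑ k ∈ Finset.range n, η k * (g (xb k) i * ∫ ω, Λ (xb k) (γ k) ω i ∂μt))
      atTop (nhds 0) := by
    have h0 : (0 : ℝ) = ∑ _i : Fin l, (0 : ℝ) := by simp
    rw [h0]
    apply tendsto_finset_sum
    intro i _
    exact cesaro_aux η hηpos H hH hHtop (fun k => g (xb k) i)
      (fun k => ∫ ω, Λ (xb k) (γ k) ω i ∂μt)
      (fun k => hg0 (xb k) i)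
      (fun k => integral_nonneg fun ω => hΛ0 _ _ _ _)
      C (hC i) (hint0 i)
  refine hmain.congr fun n => ?_
  rw [← Finset.mul_sum, Finset.sum_comm]
  congr 1
  apply Finset.sum_congr rfl
  intro k _
  rw [Finset.mul_sum]
end

section
/- Let f : E → ℝ be Lipschitz. For one step of the Talay scheme with the notation above, E[ |f(X̄') − f(x + γ b(x) + γ² Ab(x))|^ρ ] ≤ C_f γ^{ρ/2} Tr[σσ*(x)]^{ρ/2} + C_f γ^ρ |Dσ(x)|^ρ Tr[σσ*(x)]^{ρ/2} + C_f γ^{3ρ/2} Tr[σ̃σ̃*(x)]^{ρ/2}, for every ρ ∈ [1,2], provided the innovation U satisfies E|U|^ρ < ∞ and W has ρ-th moments. -/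
open MeasureTheory
open scoped NNReal

/-- Cauchy–Schwarz over a double index. -/
lemma talay_cs2 {ι κ : Type*} [Fintype ι] [Fintype κ] (f g : ι → κ → ℝ) :
    (∑ i, ∑ j, f i j * g i j) ^ 2 ≤ (∑ i, ∑ j, f i j ^ 2) * (∑ i, ∑ j, g i j ^ 2) := by
  have h := Finset.sum_mul_sq_le_sq_mul_sq Finset.univ
    (fun p : ι × κ => f p.1 p.2) (fun p : ι × κ => g p.1 p.2)
  simpa [Fintype.sum_prod_type] using h

lemma talay_add3_rpow_le {a b c ρ : ℝ} (ha : 0 ≤ a) (hb : 0 ≤ b) (hc : 0 ≤ c) (hρ : 0 ≤ ρ) :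
    (a + b + c) ^ ρ ≤ 3 ^ ρ * (a ^ ρ + b ^ ρ + c ^ ρ) := by
  set m := max a (max b c) with hm
  have hm0 : 0 ≤ m := le_trans ha (le_max_left _ _)
  have h1 : a + b + c ≤ 3 * m := by
    have := le_max_left a (max b c)
    have h2 := le_trans (le_max_left b c) (le_max_right a (max b c))
    have h3 := le_trans (le_max_right b c) (le_max_right a (max b c))
    linarith
  calc (a + b + c) ^ ρ ≤ (3 * m) ^ ρ :=
        Real.rpow_le_rpow (by linarith) h1 hρ
    _ = 3 ^ ρ * m ^ ρ := Real.mul_rpow (by norm_num) hm0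
    _ ≤ 3 ^ ρ * (a ^ ρ + b ^ ρ + c ^ ρ) := by
        have h3 : (0:ℝ) ≤ 3 ^ ρ := Real.rpow_nonneg (by norm_num) ρ
        refine mul_le_mul_of_nonneg_left ?_ h3
        have hma : m = a ∨ m = b ∨ m = c := by
          rcases max_cases a (max b c) with ⟨h, _⟩ | ⟨h, _⟩
          · exact Or.inl h
          · rcases max_cases b c with ⟨h', _⟩ | ⟨h', _⟩
            · exact Or.inr (Or.inl (h.trans h'))
            · exact Or.inr (Or.inr (h.trans h'))
        have hna := Real.rpow_nonneg ha ρ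
        have hnb := Real.rpow_nonneg hb ρ
        have hnc := Real.rpow_nonneg hc ρ
        rcases hma with h | h | h <;> rw [h] <;> linarith

lemma talay_sqrt_rpow {z : ℝ} (hz : 0 ≤ z) (ρ : ℝ) :
    Real.sqrt z ^ ρ = z ^ (ρ / 2) := by
  have h : (1 / 2 : ℝ) * ρ = ρ / 2 := by ring
  rw [Real.sqrt_eq_rpow, ← Real.rpow_mul hz, h]

set_option maxHeartbeats 1000000 in
/-- One-step growth control for the Talay scheme, Lipschitz version: for `f`
Lipschitz, `E|f(X̄') − f(x + γ b(x) + γ² Ab(x))|^ρ` is bounded by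
`C_f (γ^{ρ/2} Tr[σσ*]^{ρ/2} + γ^ρ |Dσ|^ρ Tr[σσ*]^{ρ/2} + γ^{3ρ/2} Tr[σ̃σ̃*]^{ρ/2})`. -/
theorem talay_step_growth_control_lipschitz {d N : ℕ} {Ω : Type*}
    {mΩ : MeasurableSpace Ω} (μ : Measure Ω) [IsProbabilityMeasure μ]
    (f : EuclideanSpace ℝ (Fin d) → ℝ) (Kf : ℝ≥0) (hf : LipschitzWith Kf f)
    (x : EuclideanSpace ℝ (Fin d))
    (bx Abx : Fin d → ℝ) (σx σtx : Matrix (Fin d) (Fin N) ℝ)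
    (Dσ : Fin d → Fin d → Fin N → ℝ)
    (ρ : ℝ) (hρ1 : 1 ≤ ρ) (hρ2 : ρ ≤ 2)
    (U : Ω → Fin N → ℝ) (W : Ω → Fin N → Fin N → ℝ)
    (hUmeas : Measurable U) (hWmeas : Measurable W)
    (hUcent : ∀ j, ∫ ω, U ω j ∂μ = 0)
    (hUcov : ∀ j k, ∫ ω, U ω j * U ω k ∂μ = if j = k then 1 else 0)
    (hUmom : ∫⁻ ω, ENNReal.ofReal ((∑ j, U ω j ^ 2) ^ (ρ / 2)) ∂μ < ⊤)
    (hWmom : ∫⁻ ω, ENNReal.ofReal ((∑ i, ∑ j, W ω i j ^ 2) ^ (ρ / 2)) ∂μ < ⊤) :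
    ∃ Cf : ℝ, 0 ≤ Cf ∧ ∀ γ : ℝ, 0 < γ →
      ∫⁻ ω, ENNReal.ofReal
          (|f ((WithLp.toLp 2 (fun i => x i + Real.sqrt γ * (∑ j, σx i j * U ω j)
                + γ * (bx i + ∑ j, ∑ k, ∑ l, Dσ l i j * σx l k * W ω j k)
                + γ ^ ((3 : ℝ) / 2) * (∑ j, σtx i j * U ω j)
                + γ ^ (2 : ℝ) * Abx i) : EuclideanSpace ℝ (Fin d)))
            - f ((WithLp.toLp 2 (fun i => x i + γ * bx i + γ ^ (2 : ℝ) * Abx i) :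
                EuclideanSpace ℝ (Fin d)))| ^ ρ) ∂μ
        ≤ ENNReal.ofReal (Cf * (γ ^ (ρ / 2) * (∑ i, ∑ j, σx i j ^ 2) ^ (ρ / 2)
              + γ ^ ρ * (∑ l, ∑ i, ∑ j, Dσ l i j ^ 2) ^ (ρ / 2)
                  * (∑ i, ∑ j, σx i j ^ 2) ^ (ρ / 2)
              + γ ^ (3 * ρ / 2) * (∑ i, ∑ j, σtx i j ^ 2) ^ (ρ / 2))) := by
  have hρ0 : (0:ℝ) ≤ ρ := le_trans zero_le_one hρ1
  -- measurability
  have hu : Measurable fun ω => ∑ j, U ω j ^ 2 :=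
    Finset.measurable_sum _ fun j _ => ((measurable_pi_apply j).comp hUmeas).pow_const 2
  have hw : Measurable fun ω => ∑ i, ∑ j, W ω i j ^ 2 :=
    Finset.measurable_sum _ fun i _ => Finset.measurable_sum _ fun j _ =>
      ((measurable_pi_apply j).comp ((measurable_pi_apply i).comp hWmeas)).pow_const 2
  have hgU : Measurable fun ω => ENNReal.ofReal ((∑ j, U ω j ^ 2) ^ (ρ / 2)) :=
    (hu.pow measurable_const).ennreal_ofReal
  have hgW : Measurable fun ω => ENNReal.ofReal ((∑ i, ∑ j, W ω i j ^ 2) ^ (ρ / 2)) :=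
    (hw.pow measurable_const).ennreal_ofReal
  set MU : ℝ := (∫⁻ ω, ENNReal.ofReal ((∑ j, U ω j ^ 2) ^ (ρ / 2)) ∂μ).toReal with hMU
  set MW : ℝ := (∫⁻ ω, ENNReal.ofReal ((∑ i, ∑ j, W ω i j ^ 2) ^ (ρ / 2)) ∂μ).toReal with hMW
  have hMU0 : 0 ≤ MU := ENNReal.toReal_nonneg
  have hMW0 : 0 ≤ MW := ENNReal.toReal_nonneg
  set K : ℝ := (Kf : ℝ) ^ ρ * 3 ^ ρ with hKdef
  have hK0 : 0 ≤ K :=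
    mul_nonneg (Real.rpow_nonneg Kf.2 ρ) (Real.rpow_nonneg (by norm_num) ρ)
  refine ⟨K * (MU + MW + 1), by positivity, ?_⟩
  intro γ hγ
  set T : ℝ := ∑ i, ∑ j, σx i j ^ 2 with hT
  set DD : ℝ := ∑ l, ∑ i, ∑ j, Dσ l i j ^ 2 with hDD
  set Tt : ℝ := ∑ i, ∑ j, σtx i j ^ 2 with hTt
  have hT0 : 0 ≤ T := Finset.sum_nonneg fun i _ => Finset.sum_nonneg fun j _ => sq_nonneg _
  have hDD0 : 0 ≤ DD := Finset.sum_nonneg fun l _ =>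
    Finset.sum_nonneg fun i _ => Finset.sum_nonneg fun j _ => sq_nonneg _
  have hTt0 : 0 ≤ Tt := Finset.sum_nonneg fun i _ => Finset.sum_nonneg fun j _ => sq_nonneg _
  set P : ℝ := γ ^ (ρ / 2) * T ^ (ρ / 2) with hP
  set Q : ℝ := γ ^ ρ * DD ^ (ρ / 2) * T ^ (ρ / 2) with hQ
  set R : ℝ := γ ^ (3 * ρ / 2) * Tt ^ (ρ / 2) with hR
  have hP0 : 0 ≤ P := mul_nonneg (Real.rpow_nonneg hγ.le _) (Real.rpow_nonneg hT0 _)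
  have hQ0 : 0 ≤ Q := mul_nonneg (mul_nonneg (Real.rpow_nonneg hγ.le _)
    (Real.rpow_nonneg hDD0 _)) (Real.rpow_nonneg hT0 _)
  have hR0 : 0 ≤ R := mul_nonneg (Real.rpow_nonneg hγ.le _) (Real.rpow_nonneg hTt0 _)
  -- pointwise bound
  have key : ∀ ω : Ω,
      |f ((WithLp.toLp 2 (fun i => x i + Real.sqrt γ * (∑ j, σx i j * U ω j)
                + γ * (bx i + ∑ j, ∑ k, ∑ l, Dσ l i j * σx l k * W ω j k)
                + γ ^ ((3 : ℝ) / 2) * (∑ j, σtx i j * U ω j)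
                + γ ^ (2 : ℝ) * Abx i) : EuclideanSpace ℝ (Fin d)))
            - f ((WithLp.toLp 2 (fun i => x i + γ * bx i + γ ^ (2 : ℝ) * Abx i) :
                EuclideanSpace ℝ (Fin d)))| ^ ρ
        ≤ K * ((P + R) * (∑ j, U ω j ^ 2) ^ (ρ / 2)
            + Q * (∑ i, ∑ j, W ω i j ^ 2) ^ (ρ / 2)) := by
    intro ω
    set u : ℝ := ∑ j, U ω j ^ 2 with hudef
    set w : ℝ := ∑ i, ∑ j, W ω i j ^ 2 with hwdef
    have hu0 : 0 ≤ u := Finset.sum_nonneg fun j _ => sq_nonneg _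
    have hw0 : 0 ≤ w := Finset.sum_nonneg fun i _ => Finset.sum_nonneg fun j _ => sq_nonneg _
    set X : EuclideanSpace ℝ (Fin d) := WithLp.toLp 2 (fun i => x i + Real.sqrt γ * (∑ j, σx i j * U ω j)
                + γ * (bx i + ∑ j, ∑ k, ∑ l, Dσ l i j * σx l k * W ω j k)
                + γ ^ ((3 : ℝ) / 2) * (∑ j, σtx i j * U ω j)
                + γ ^ (2 : ℝ) * Abx i) with hX
    set Y : EuclideanSpace ℝ (Fin d) := WithLp.toLp 2 (fun i => x i + γ * bx i + γ ^ (2 : ℝ) * Abx i) with hY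
    set A : EuclideanSpace ℝ (Fin d) := WithLp.toLp 2 (fun i => Real.sqrt γ * (∑ j, σx i j * U ω j)) with hA
    set B : EuclideanSpace ℝ (Fin d) :=
      WithLp.toLp 2 (fun i => γ * (∑ j, ∑ k, ∑ l, Dσ l i j * σx l k * W ω j k)) with hB
    set C : EuclideanSpace ℝ (Fin d) := WithLp.toLp 2 (fun i => γ ^ ((3 : ℝ) / 2) * (∑ j, σtx i j * U ω j))
      with hC
    have hXY : X - Y = A + B + C := by
      ext i
      simp only [PiLp.sub_apply, PiLp.add_apply, hX, hY, hA, hB, hC, PiLp.toLp_apply]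
      ring
    -- norm of A
    have hAn : ‖A‖ ≤ Real.sqrt (γ * (T * u)) := by
      rw [EuclideanSpace.norm_eq]
      apply Real.sqrt_le_sqrt
      have h1 : ∀ i, (∑ j, σx i j * U ω j) ^ 2 ≤ (∑ j, σx i j ^ 2) * u :=
        fun i => Finset.sum_mul_sq_le_sq_mul_sq _ _ _
      calc ∑ i, ‖A i‖ ^ 2 = γ * ∑ i, (∑ j, σx i j * U ω j) ^ 2 := by
            rw [Finset.mul_sum]
            exact Finset.sum_congr rfl fun i _ => by
              simp only [hA, PiLp.toLp_apply, Real.norm_eq_abs, sq_abs, mul_pow, Real.sq_sqrt hγ.le]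
        _ ≤ γ * (T * u) := by
            refine mul_le_mul_of_nonneg_left ?_ hγ.le
            calc ∑ i, (∑ j, σx i j * U ω j) ^ 2 ≤ ∑ i, (∑ j, σx i j ^ 2) * u :=
                  Finset.sum_le_sum fun i _ => h1 i
              _ = T * u := by rw [hT, ← Finset.sum_mul]
    -- norm of C
    have hCn : ‖C‖ ≤ Real.sqrt (γ ^ (3:ℕ) * (Tt * u)) := by
      rw [EuclideanSpace.norm_eq]
      apply Real.sqrt_le_sqrt
      have h1 : ∀ i, (∑ j, σtx i j * U ω j) ^ 2 ≤ (∑ j, σtx i j ^ 2) * u :=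
        fun i => Finset.sum_mul_sq_le_sq_mul_sq _ _ _
      have hcoef : (γ ^ ((3:ℝ)/2)) ^ (2:ℕ) = γ ^ (3:ℕ) := by
        rw [← Real.rpow_natCast (γ ^ ((3:ℝ)/2)) 2, ← Real.rpow_mul hγ.le,
          ← Real.rpow_natCast γ 3]
        norm_num
      calc ∑ i, ‖C i‖ ^ 2 = γ ^ (3:ℕ) * ∑ i, (∑ j, σtx i j * U ω j) ^ 2 := by
            rw [Finset.mul_sum]
            exact Finset.sum_congr rfl fun i _ => by
              simp only [hC, PiLp.toLp_apply, Real.norm_eq_abs, sq_abs, mul_pow, hcoef]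
        _ ≤ γ ^ (3:ℕ) * (Tt * u) := by
            refine mul_le_mul_of_nonneg_left ?_ (pow_nonneg hγ.le 3)
            calc ∑ i, (∑ j, σtx i j * U ω j) ^ 2 ≤ ∑ i, (∑ j, σtx i j ^ 2) * u :=
                  Finset.sum_le_sum fun i _ => h1 i
              _ = Tt * u := by rw [hTt, ← Finset.sum_mul]
    -- norm of B
    have hBn : ‖B‖ ≤ Real.sqrt (γ ^ (2:ℕ) * (DD * (T * w))) := by
      rw [EuclideanSpace.norm_eq]
      apply Real.sqrt_le_sqrt
      have hS : ∀ i, (∑ j, ∑ k, ∑ l, Dσ l i j * σx l k * W ω j k)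
          = ∑ l, ∑ j, Dσ l i j * (∑ k, σx l k * W ω j k) := by
        intro i
        calc ∑ j, ∑ k, ∑ l, Dσ l i j * σx l k * W ω j k
            = ∑ j, ∑ l, ∑ k, Dσ l i j * σx l k * W ω j k :=
              Finset.sum_congr rfl fun j _ => Finset.sum_comm
          _ = ∑ l, ∑ j, ∑ k, Dσ l i j * σx l k * W ω j k := Finset.sum_comm
          _ = ∑ l, ∑ j, Dσ l i j * (∑ k, σx l k * W ω j k) := by
              refine Finset.sum_congr rfl fun l _ => Finset.sum_congr rfl fun j _ => ?_
              rw [Finset.mul_sum]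
              exact Finset.sum_congr rfl fun k _ => by ring
      have hV : (∑ l, ∑ j, (∑ k, σx l k * W ω j k) ^ 2) ≤ T * w := by
        calc (∑ l, ∑ j, (∑ k, σx l k * W ω j k) ^ 2)
            ≤ ∑ l, ∑ j, (∑ k, σx l k ^ 2) * (∑ k, W ω j k ^ 2) :=
              Finset.sum_le_sum fun l _ => Finset.sum_le_sum fun j _ =>
                Finset.sum_mul_sq_le_sq_mul_sq _ _ _
          _ = T * w := by
              rw [hT, hwdef, Finset.sum_mul_sum]
      have hSi : ∀ i, (∑ j, ∑ k, ∑ l, Dσ l i j * σx l k * W ω j k) ^ 2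
          ≤ (∑ l, ∑ j, Dσ l i j ^ 2) * (T * w) := by
        intro i
        rw [hS i]
        calc (∑ l, ∑ j, Dσ l i j * (∑ k, σx l k * W ω j k)) ^ 2
            ≤ (∑ l, ∑ j, Dσ l i j ^ 2) * (∑ l, ∑ j, (∑ k, σx l k * W ω j k) ^ 2) :=
              talay_cs2 _ _
          _ ≤ (∑ l, ∑ j, Dσ l i j ^ 2) * (T * w) := by
              refine mul_le_mul_of_nonneg_left hV ?_
              exact Finset.sum_nonneg fun l _ => Finset.sum_nonneg fun j _ => sq_nonneg _
      calc ∑ i, ‖B i‖ ^ 2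
          = γ ^ (2:ℕ) * ∑ i, (∑ j, ∑ k, ∑ l, Dσ l i j * σx l k * W ω j k) ^ 2 := by
            rw [Finset.mul_sum]
            exact Finset.sum_congr rfl fun i _ => by
              simp only [hB, PiLp.toLp_apply, Real.norm_eq_abs, sq_abs, mul_pow]
        _ ≤ γ ^ (2:ℕ) * (DD * (T * w)) := by
            refine mul_le_mul_of_nonneg_left ?_ (pow_nonneg hγ.le 2)
            calc ∑ i, (∑ j, ∑ k, ∑ l, Dσ l i j * σx l k * W ω j k) ^ 2
                ≤ ∑ i, (∑ l, ∑ j, Dσ l i j ^ 2) * (T * w) :=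
                  Finset.sum_le_sum fun i _ => hSi i
              _ = DD * (T * w) := by
                  rw [← Finset.sum_mul, hDD, Finset.sum_comm]
    -- Lipschitz step
    have h1 : |f X - f Y| ≤ (Kf : ℝ) * ‖X - Y‖ := by
      have := hf.dist_le_mul X Y
      simpa [Real.dist_eq, dist_eq_norm] using this
    set sa : ℝ := Real.sqrt (γ * (T * u)) with hsa
    set sb : ℝ := Real.sqrt (γ ^ (2:ℕ) * (DD * (T * w))) with hsb
    set sc : ℝ := Real.sqrt (γ ^ (3:ℕ) * (Tt * u)) with hsc
    have hnorm : ‖X - Y‖ ≤ sa + sb + sc := by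
      rw [hXY]
      calc ‖A + B + C‖ ≤ ‖A‖ + ‖B‖ + ‖C‖ := norm_add₃_le
        _ ≤ sa + sb + sc := by gcongr
    have habs : |f X - f Y| ≤ (Kf : ℝ) * (sa + sb + sc) := by
      refine h1.trans (mul_le_mul_of_nonneg_left hnorm Kf.2)
    -- rpow computations
    have hsaρ : sa ^ ρ = P * u ^ (ρ / 2) := by
      rw [hsa, talay_sqrt_rpow (mul_nonneg hγ.le (mul_nonneg hT0 hu0)) ρ,
        Real.mul_rpow hγ.le (mul_nonneg hT0 hu0), Real.mul_rpow hT0 hu0, hP]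
      ring
    have hscρ : sc ^ ρ = R * u ^ (ρ / 2) := by
      rw [hsc, talay_sqrt_rpow (mul_nonneg (pow_nonneg hγ.le 3) (mul_nonneg hTt0 hu0)) ρ,
        Real.mul_rpow (pow_nonneg hγ.le 3) (mul_nonneg hTt0 hu0), Real.mul_rpow hTt0 hu0, hR,
        ← Real.rpow_natCast γ 3, ← Real.rpow_mul hγ.le]
      have h3 : ((3:ℕ):ℝ) * (ρ / 2) = 3 * ρ / 2 := by push_cast; ring
      rw [h3]; ring
    have hsbρ : sb ^ ρ = Q * w ^ (ρ / 2) := by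
      have hx0 : (0:ℝ) ≤ DD * (T * w) := mul_nonneg hDD0 (mul_nonneg hT0 hw0)
      rw [hsb, talay_sqrt_rpow (mul_nonneg (pow_nonneg hγ.le 2) hx0) ρ,
        Real.mul_rpow (pow_nonneg hγ.le 2) hx0,
        Real.mul_rpow hDD0 (mul_nonneg hT0 hw0), Real.mul_rpow hT0 hw0, hQ,
        ← Real.rpow_natCast γ 2, ← Real.rpow_mul hγ.le]
      have h2 : ((2:ℕ):ℝ) * (ρ / 2) = ρ := by push_cast; ring
      rw [h2]; ring
    -- combine
    have hsum0 : 0 ≤ sa + sb + sc :=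
      add_nonneg (add_nonneg (Real.sqrt_nonneg _) (Real.sqrt_nonneg _)) (Real.sqrt_nonneg _)
    calc |f X - f Y| ^ ρ ≤ ((Kf : ℝ) * (sa + sb + sc)) ^ ρ :=
          Real.rpow_le_rpow (abs_nonneg _) habs hρ0
      _ = (Kf : ℝ) ^ ρ * (sa + sb + sc) ^ ρ := Real.mul_rpow Kf.2 hsum0
      _ ≤ (Kf : ℝ) ^ ρ * (3 ^ ρ * (sa ^ ρ + sb ^ ρ + sc ^ ρ)) := by
          refine mul_le_mul_of_nonneg_left ?_ (Real.rpow_nonneg Kf.2 ρ)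
          exact talay_add3_rpow_le (Real.sqrt_nonneg _) (Real.sqrt_nonneg _)
            (Real.sqrt_nonneg _) hρ0
      _ = K * ((P + R) * u ^ (ρ / 2) + Q * w ^ (ρ / 2)) := by
          rw [hsaρ, hsbρ, hscρ, hKdef]; ring
  -- integrate
  have hstep1 : ∫⁻ ω, ENNReal.ofReal
          (|f ((WithLp.toLp 2 (fun i => x i + Real.sqrt γ * (∑ j, σx i j * U ω j)
                + γ * (bx i + ∑ j, ∑ k, ∑ l, Dσ l i j * σx l k * W ω j k)
                + γ ^ ((3 : ℝ) / 2) * (∑ j, σtx i j * U ω j)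
                + γ ^ (2 : ℝ) * Abx i) : EuclideanSpace ℝ (Fin d)))
            - f ((WithLp.toLp 2 (fun i => x i + γ * bx i + γ ^ (2 : ℝ) * Abx i) :
                EuclideanSpace ℝ (Fin d)))| ^ ρ) ∂μ
      ≤ ∫⁻ ω, (ENNReal.ofReal (K * (P + R)) *
            ENNReal.ofReal ((∑ j, U ω j ^ 2) ^ (ρ / 2))
          + ENNReal.ofReal (K * Q) *
            ENNReal.ofReal ((∑ i, ∑ j, W ω i j ^ 2) ^ (ρ / 2))) ∂μ := by
    refine lintegral_mono fun ω => ?_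
    have hKPR : 0 ≤ K * (P + R) := mul_nonneg hK0 (by linarith)
    have hKQ : 0 ≤ K * Q := mul_nonneg hK0 hQ0
    calc ENNReal.ofReal _ ≤ ENNReal.ofReal (K * ((P + R) * (∑ j, U ω j ^ 2) ^ (ρ / 2)
            + Q * (∑ i, ∑ j, W ω i j ^ 2) ^ (ρ / 2))) :=
          ENNReal.ofReal_le_ofReal (key ω)
      _ = ENNReal.ofReal (K * (P + R) * (∑ j, U ω j ^ 2) ^ (ρ / 2)
            + K * Q * (∑ i, ∑ j, W ω i j ^ 2) ^ (ρ / 2)) := by congr 1; ring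
      _ = _ := by
          rw [ENNReal.ofReal_add
              (mul_nonneg hKPR (Real.rpow_nonneg (by positivity) _))
              (mul_nonneg hKQ (Real.rpow_nonneg (by positivity) _)),
            ENNReal.ofReal_mul hKPR, ENNReal.ofReal_mul hKQ]
  have hstep2 : (∫⁻ ω, (ENNReal.ofReal (K * (P + R)) *
            ENNReal.ofReal ((∑ j, U ω j ^ 2) ^ (ρ / 2))
          + ENNReal.ofReal (K * Q) *
            ENNReal.ofReal ((∑ i, ∑ j, W ω i j ^ 2) ^ (ρ / 2))) ∂μ)
      = ENNReal.ofReal (K * (P + R)) *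
          (∫⁻ ω, ENNReal.ofReal ((∑ j, U ω j ^ 2) ^ (ρ / 2)) ∂μ)
        + ENNReal.ofReal (K * Q) *
          (∫⁻ ω, ENNReal.ofReal ((∑ i, ∑ j, W ω i j ^ 2) ^ (ρ / 2)) ∂μ) := by
    rw [lintegral_add_left (hgU.const_mul _), lintegral_const_mul _ hgU,
      lintegral_const_mul _ hgW]
  have hIU : (∫⁻ ω, ENNReal.ofReal ((∑ j, U ω j ^ 2) ^ (ρ / 2)) ∂μ)
      = ENNReal.ofReal MU := (ENNReal.ofReal_toReal hUmom.ne).symm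
  have hIW : (∫⁻ ω, ENNReal.ofReal ((∑ i, ∑ j, W ω i j ^ 2) ^ (ρ / 2)) ∂μ)
      = ENNReal.ofReal MW := (ENNReal.ofReal_toReal hWmom.ne).symm
  refine (hstep1.trans_eq hstep2).trans ?_
  rw [hIU, hIW, ← ENNReal.ofReal_mul (mul_nonneg hK0 (by linarith)),
    ← ENNReal.ofReal_mul (mul_nonneg hK0 hQ0),
    ← ENNReal.ofReal_add (mul_nonneg (mul_nonneg hK0 (add_nonneg hP0 hR0)) hMU0)
      (mul_nonneg (mul_nonneg hK0 hQ0) hMW0)]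
  refine ENNReal.ofReal_le_ofReal ?_
  have hnn : 0 ≤ P * MW + P + Q * MU + Q + R * MW + R := by
    have h1 := mul_nonneg hP0 hMW0
    have h2 := mul_nonneg hQ0 hMU0
    have h3 := mul_nonneg hR0 hMW0
    linarith
  nlinarith [mul_nonneg hK0 hnn]
end

section
/- Let ξ ∈ (0,1), γ_n = n^{−ξ}, Γ_n = ∑_{k≤n} γ_k, and H̃_n = ∑_{k≤n} γ_k^{q+1} for an integer q ≥ 1. Define r_n = min(√Γ_n, Γ_n / H̃_n) (up to constants). Then r_n ~ C n^{(qξ) ∧ ((1−ξ)/2)} as n → ∞, and this exponent is maximized at ξ = 1/(2q+1), yielding r_n ~ C n^{q/(2q+1)}. -/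
open Filter

lemma sum_rpow_lower (s : ℝ) (hs0 : 0 < s) (hs1 : s < 1) (n : ℕ) :
    ((n : ℝ) ^ (1 - s) - 1) / (1 - s) ≤ ∑ k ∈ Finset.Icc 1 n, (k : ℝ) ^ (-s) := by
  have hanti : AntitoneOn (fun x : ℝ => x ^ (-s)) (Set.Icc (1:ℝ) (1 + n)) := by
    intro x hx y hy hxy
    exact Real.rpow_le_rpow_of_nonpos (lt_of_lt_of_le one_pos hx.1) hxy (by linarith)
  have h := hanti.integral_le_sum
  have hint : (∫ x in (1:ℝ)..(1 + (n:ℝ)), x ^ (-s)) =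
      ((1 + (n:ℝ)) ^ (1 - s) - 1) / (1 - s) := by
    rw [integral_rpow (Or.inl (by linarith))]
    rw [Real.one_rpow]
    ring_nf
  rw [hint] at h
  have hsum : ∑ i ∈ Finset.range n, ((1:ℝ) + (i:ℕ)) ^ (-s)
      = ∑ k ∈ Finset.Icc 1 n, (k : ℝ) ^ (-s) := by
    rw [← Finset.Ico_add_one_right_eq_Icc, Finset.sum_Ico_eq_sum_range]
    refine Finset.sum_congr (by norm_num) fun i _ => by push_cast; ring_nf
  rw [hsum] at h
  refine le_trans ?_ h
  have hle : (n:ℝ) ^ (1 - s) ≤ (1 + (n:ℝ)) ^ (1 - s) :=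
    Real.rpow_le_rpow (Nat.cast_nonneg n) (by linarith) (by linarith)
  have h1s : (0:ℝ) < 1 - s := by linarith
  gcongr <;> linarith

lemma sum_rpow_upper (s : ℝ) (hs0 : 0 < s) (hs1 : s < 1) (n : ℕ) (hn : 1 ≤ n) :
    ∑ k ∈ Finset.Icc 1 n, (k : ℝ) ^ (-s) ≤ 1 + ((n : ℝ) ^ (1 - s) - 1) / (1 - s) := by
  have hanti : AntitoneOn (fun x : ℝ => x ^ (-s)) (Set.Icc (1:ℝ) (1 + (n-1 : ℕ))) := by
    intro x hx y hy hxy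
    exact Real.rpow_le_rpow_of_nonpos (lt_of_lt_of_le one_pos hx.1) hxy (by linarith)
  have h := hanti.sum_le_integral
  have hcast : (1 : ℝ) + ((n - 1 : ℕ) : ℝ) = (n : ℝ) := by
    have := Nat.cast_sub hn (R := ℝ); push_cast [this]; ring
  rw [hcast] at h
  have hint : (∫ x in (1:ℝ)..(n:ℝ), x ^ (-s)) = ((n:ℝ) ^ (1 - s) - 1) / (1 - s) := by
    rw [integral_rpow (Or.inl (by linarith))]
    rw [Real.one_rpow]
    ring_nf
  rw [hint] at h
  have hsum : ∑ i ∈ Finset.range (n-1), ((1:ℝ) + ((i + 1 : ℕ):ℝ)) ^ (-s)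
      = ∑ k ∈ Finset.Icc 2 n, (k : ℝ) ^ (-s) := by
    rw [← Finset.Ico_add_one_right_eq_Icc, Finset.sum_Ico_eq_sum_range]
    have : n + 1 - 2 = n - 1 := by omega
    rw [this]
    refine Finset.sum_congr rfl fun i _ => ?_
    push_cast; ring_nf
  rw [hsum] at h
  have hsplit : ∑ k ∈ Finset.Icc 1 n, (k : ℝ) ^ (-s)
      = 1 + ∑ k ∈ Finset.Icc 2 n, (k : ℝ) ^ (-s) := by
    rw [← Finset.sum_Ioc_add_eq_sum_Icc (by exact_mod_cast hn)]
    have : Finset.Ioc 1 n = Finset.Icc 2 n := rfl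
    rw [this]
    norm_num [add_comm]
  rw [hsplit]
  linarith

lemma tendsto_sum_rpow (s : ℝ) (hs0 : 0 < s) (hs1 : s < 1) :
    Tendsto (fun n : ℕ => (∑ k ∈ Finset.Icc 1 n, (k : ℝ) ^ (-s)) / (n : ℝ) ^ (1 - s))
      atTop (nhds (1 / (1 - s))) := by
  have h1s : (0:ℝ) < 1 - s := by linarith
  have hp : Tendsto (fun n : ℕ => (n : ℝ) ^ (1 - s)) atTop atTop :=
    (tendsto_rpow_atTop h1s).comp tendsto_natCast_atTop_atTop
  have hinv : Tendsto (fun n : ℕ => ((n : ℝ) ^ (1 - s))⁻¹) atTop (nhds 0) :=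
    hp.inv_tendsto_atTop
  have hL : Tendsto (fun n : ℕ => 1 / (1 - s) - (1 / (1 - s)) * ((n : ℝ) ^ (1 - s))⁻¹)
      atTop (nhds (1 / (1 - s))) := by
    have := (tendsto_const_nhds (x := (1:ℝ)/(1-s)) (f := atTop (α := ℕ))).sub
      ((tendsto_const_nhds (x := (1:ℝ)/(1-s))).mul hinv)
    simpa using this
  have hU : Tendsto (fun n : ℕ => 1 / (1 - s) + (1 - 1 / (1 - s)) * ((n : ℝ) ^ (1 - s))⁻¹)
      atTop (nhds (1 / (1 - s))) := by
    have := (tendsto_const_nhds (x := (1:ℝ)/(1-s)) (f := atTop (α := ℕ))).add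
      ((tendsto_const_nhds (x := 1 - (1:ℝ)/(1-s))).mul hinv)
    simpa using this
  refine tendsto_of_tendsto_of_tendsto_of_le_of_le' hL hU ?_ ?_
  · filter_upwards [eventually_ge_atTop 1] with n hn
    have hnp : (0:ℝ) < (n:ℝ) ^ (1 - s) :=
      Real.rpow_pos_of_pos (by exact_mod_cast hn) _
    have hlow := sum_rpow_lower s hs0 hs1 n
    have heq : 1 / (1 - s) - 1 / (1 - s) * ((n:ℝ) ^ (1 - s))⁻¹
        = (((n:ℝ) ^ (1 - s) - 1) / (1 - s)) / ((n:ℝ) ^ (1 - s)) := by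
      field_simp
    rw [heq]
    gcongr
  · filter_upwards [eventually_ge_atTop 1] with n hn
    have hnp : (0:ℝ) < (n:ℝ) ^ (1 - s) :=
      Real.rpow_pos_of_pos (by exact_mod_cast hn) _
    have hup := sum_rpow_upper s hs0 hs1 n hn
    have heq : 1 / (1 - s) + (1 - 1 / (1 - s)) * ((n:ℝ) ^ (1 - s))⁻¹
        = (1 + ((n:ℝ) ^ (1 - s) - 1) / (1 - s)) / ((n:ℝ) ^ (1 - s)) := by
      field_simp; ring
    rw [heq]
    gcongr


lemma sum_pos_of_one_le {s : ℝ} (n : ℕ) (hn : 1 ≤ n) :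
    0 < ∑ k ∈ Finset.Icc 1 n, (k : ℝ) ^ (-s) := by
  apply Finset.sum_pos (fun k hk => ?_) ⟨1, by simpa using hn⟩
  have : (0:ℝ) < (k:ℝ) := by
    exact_mod_cast (Finset.mem_Icc.1 hk).1
  positivity

/-- Rate optimization for the order-`q` CLT with steps `γ_n = n^{−ξ}`:
with `Γ_n = ∑_{k≤n} k^{−ξ}` and `H̃_n = ∑_{k≤n} k^{−(q+1)ξ}`, the rate
`r_n = min(√Γ_n, Γ_n/H̃_n)` satisfies `r_n ∼ C n^{(qξ) ∧ ((1−ξ)/2)}`; the exponent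
is at most `q/(2q+1)` for all `ξ ∈ (0,1)`, with equality at `ξ = 1/(2q+1)`. -/
theorem rate_optimization (q : ℕ) (hq : 1 ≤ q) (ξ : ℝ) (hξ0 : 0 < ξ) (hξ1 : ξ < 1)
    (hξq : ((q : ℝ) + 1) * ξ < 1) :
    (∃ C : ℝ, 0 < C ∧ Tendsto (fun n : ℕ =>
        min (Real.sqrt (∑ k ∈ Finset.Icc 1 n, (k : ℝ) ^ (-ξ)))
            ((∑ k ∈ Finset.Icc 1 n, (k : ℝ) ^ (-ξ)) /
              (∑ k ∈ Finset.Icc 1 n, (k : ℝ) ^ (-(((q : ℝ) + 1) * ξ))))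
          / (n : ℝ) ^ min ((q : ℝ) * ξ) ((1 - ξ) / 2)) atTop (nhds C))
    ∧ (∀ ξ' : ℝ, 0 < ξ' → ξ' < 1 →
        min ((q : ℝ) * ξ') ((1 - ξ') / 2) ≤ (q : ℝ) / (2 * (q : ℝ) + 1))
    ∧ min ((q : ℝ) * (1 / (2 * (q : ℝ) + 1))) ((1 - 1 / (2 * (q : ℝ) + 1)) / 2)
        = (q : ℝ) / (2 * (q : ℝ) + 1) := by
  have hqR : (1:ℝ) ≤ (q:ℝ) := by exact_mod_cast hq
  set s₂ : ℝ := ((q:ℝ) + 1) * ξ with hs₂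
  have hs₂0 : 0 < s₂ := by positivity
  have hξq' : (0:ℝ) < 1 - s₂ := by linarith
  set S : ℕ → ℝ := fun n => ∑ k ∈ Finset.Icc 1 n, (k : ℝ) ^ (-ξ) with hS
  set T : ℕ → ℝ := fun n => ∑ k ∈ Finset.Icc 1 n, (k : ℝ) ^ (-s₂) with hT
  have hA : Tendsto (fun n : ℕ => S n / (n : ℝ) ^ (1 - ξ)) atTop (nhds (1 / (1 - ξ))) :=
    tendsto_sum_rpow ξ hξ0 hξ1
  have hB : Tendsto (fun n : ℕ => T n / (n : ℝ) ^ (1 - s₂)) atTop (nhds (1 / (1 - s₂))) :=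
    tendsto_sum_rpow s₂ hs₂0 (by linarith)
  -- the sqrt part
  have hApos : (0:ℝ) < 1 / (1 - ξ) := by
    have : (0:ℝ) < 1 - ξ := by linarith
    positivity
  have hBpos : (0:ℝ) < 1 / (1 - s₂) := by positivity
  have hsqrt : Tendsto (fun n : ℕ => Real.sqrt (S n) / (n : ℝ) ^ ((1 - ξ) / 2)) atTop
      (nhds (Real.sqrt (1 / (1 - ξ)))) := by
    have h1 : Tendsto (fun n : ℕ => Real.sqrt (S n / (n : ℝ) ^ (1 - ξ))) atTop
        (nhds (Real.sqrt (1 / (1 - ξ)))) := (Real.continuous_sqrt.tendsto _).comp hA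
    refine h1.congr' ?_
    filter_upwards [eventually_ge_atTop 1] with n hn
    have hn0 : (0:ℝ) < (n:ℝ) := by exact_mod_cast hn
    have hSpos : 0 ≤ S n := (sum_pos_of_one_le n hn).le
    have hrw : ((n:ℝ)) ^ ((1 - ξ) / 2) = Real.sqrt ((n:ℝ) ^ (1 - ξ)) := by
      rw [Real.sqrt_eq_rpow, ← Real.rpow_mul hn0.le]
      congr 1
      ring
    rw [Real.sqrt_div hSpos, hrw]
  -- the ratio part
  have hratio : Tendsto (fun n : ℕ => (S n / T n) / (n : ℝ) ^ ((q:ℝ) * ξ)) atTop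
      (nhds ((1 - s₂) / (1 - ξ))) := by
    have h1 : Tendsto (fun n : ℕ => (S n / (n : ℝ) ^ (1 - ξ)) / (T n / (n : ℝ) ^ (1 - s₂)))
        atTop (nhds ((1 / (1 - ξ)) / (1 / (1 - s₂)))) := hA.div hB (ne_of_gt hBpos)
    have heqlim : (1 / (1 - ξ)) / (1 / (1 - s₂)) = (1 - s₂) / (1 - ξ) := by
      field_simp
    rw [heqlim] at h1
    refine h1.congr' ?_
    filter_upwards [eventually_ge_atTop 1] with n hn
    have hn0 : (0:ℝ) < (n:ℝ) := by exact_mod_cast hn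
    have hTpos : 0 < T n := sum_pos_of_one_le n hn
    have ha : (0:ℝ) < (n:ℝ) ^ (1 - ξ) := Real.rpow_pos_of_pos hn0 _
    have hb : (0:ℝ) < (n:ℝ) ^ (1 - s₂) := Real.rpow_pos_of_pos hn0 _
    have hc : (0:ℝ) < (n:ℝ) ^ ((q:ℝ) * ξ) := Real.rpow_pos_of_pos hn0 _
    have habc : (n:ℝ) ^ (1 - ξ) = (n:ℝ) ^ (1 - s₂) * (n:ℝ) ^ ((q:ℝ) * ξ) := by
      rw [← Real.rpow_add hn0]
      congr 1
      rw [hs₂]; ring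
    rw [habc]
    field_simp
  -- abbreviations for the limit values
  set A : ℝ := Real.sqrt (1 / (1 - ξ)) with hAdef
  set B : ℝ := (1 - s₂) / (1 - ξ) with hBdef
  have hA0 : 0 < A := Real.sqrt_pos.2 hApos
  have hB0 : 0 < B := by apply div_pos <;> linarith
  refine ⟨?_, ?_, ?_⟩
  · -- main limit
    rcases lt_trichotomy ((q:ℝ) * ξ) ((1 - ξ) / 2) with hlt | heq | hgt
    · -- exponent is q ξ; sqrt term grows faster
      refine ⟨B, hB0, ?_⟩
      have hmin : min ((q:ℝ) * ξ) ((1 - ξ) / 2) = (q:ℝ) * ξ := min_eq_left hlt.le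
      rw [hmin]
      have hgrow : Tendsto (fun n : ℕ => Real.sqrt (S n) / (n : ℝ) ^ ((q:ℝ) * ξ)) atTop atTop := by
        have hδ : (0:ℝ) < (1 - ξ) / 2 - (q:ℝ) * ξ := by linarith
        have hpow : Tendsto (fun n : ℕ => (n : ℝ) ^ ((1 - ξ) / 2 - (q:ℝ) * ξ)) atTop atTop :=
          (tendsto_rpow_atTop hδ).comp tendsto_natCast_atTop_atTop
        refine (hsqrt.pos_mul_atTop hA0 hpow).congr' ?_
        filter_upwards [eventually_ge_atTop 1] with n hn
        have hn0 : (0:ℝ) < (n:ℝ) := by exact_mod_cast hn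
        have hsplit : (n:ℝ) ^ ((1 - ξ) / 2)
            = (n:ℝ) ^ ((q:ℝ) * ξ) * (n:ℝ) ^ ((1 - ξ) / 2 - (q:ℝ) * ξ) := by
          rw [← Real.rpow_add hn0]; congr 1; ring
        have h1 : (0:ℝ) < (n:ℝ) ^ ((q:ℝ) * ξ) := Real.rpow_pos_of_pos hn0 _
        have h2 : (0:ℝ) < (n:ℝ) ^ ((1 - ξ) / 2 - (q:ℝ) * ξ) := Real.rpow_pos_of_pos hn0 _
        rw [hsplit]
        field_simp
      refine hratio.congr' ?_
      filter_upwards [hgrow.eventually_ge_atTop (B + 1),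
        hratio.eventually (gt_mem_nhds (by linarith : B < B + 1)),
        eventually_ge_atTop 1] with n hg hr hn
      have hn0 : (0:ℝ) < (n:ℝ) := by exact_mod_cast hn
      have hc : (0:ℝ) ≤ (n:ℝ) ^ ((q:ℝ) * ξ) := (Real.rpow_pos_of_pos hn0 _).le
      rw [← min_div_div_right hc, min_eq_right (le_trans (le_of_lt hr) hg)]
    · -- equal exponents
      refine ⟨min A B, lt_min hA0 hB0, ?_⟩
      have hmin : min ((q:ℝ) * ξ) ((1 - ξ) / 2) = (q:ℝ) * ξ := min_eq_left heq.le
      rw [hmin]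
      rw [← heq] at hsqrt
      refine (hsqrt.min hratio).congr' ?_
      filter_upwards [eventually_ge_atTop 1] with n hn
      have hn0 : (0:ℝ) < (n:ℝ) := by exact_mod_cast hn
      have hc : (0:ℝ) ≤ (n:ℝ) ^ ((q:ℝ) * ξ) := (Real.rpow_pos_of_pos hn0 _).le
      rw [← min_div_div_right hc]
    · -- exponent is (1-ξ)/2; ratio term grows faster
      refine ⟨A, hA0, ?_⟩
      have hmin : min ((q:ℝ) * ξ) ((1 - ξ) / 2) = (1 - ξ) / 2 := min_eq_right hgt.le
      rw [hmin]
      have hgrow : Tendsto (fun n : ℕ => (S n / T n) / (n : ℝ) ^ ((1 - ξ) / 2)) atTop atTop := by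
        have hδ : (0:ℝ) < (q:ℝ) * ξ - (1 - ξ) / 2 := by linarith
        have hpow : Tendsto (fun n : ℕ => (n : ℝ) ^ ((q:ℝ) * ξ - (1 - ξ) / 2)) atTop atTop :=
          (tendsto_rpow_atTop hδ).comp tendsto_natCast_atTop_atTop
        refine (hratio.pos_mul_atTop hB0 hpow).congr' ?_
        filter_upwards [eventually_ge_atTop 1] with n hn
        have hn0 : (0:ℝ) < (n:ℝ) := by exact_mod_cast hn
        have hsplit : (n:ℝ) ^ ((q:ℝ) * ξ)
            = (n:ℝ) ^ ((1 - ξ) / 2) * (n:ℝ) ^ ((q:ℝ) * ξ - (1 - ξ) / 2) := by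
          rw [← Real.rpow_add hn0]; congr 1; ring
        have h1 : (0:ℝ) < (n:ℝ) ^ ((1 - ξ) / 2) := Real.rpow_pos_of_pos hn0 _
        have h2 : (0:ℝ) < (n:ℝ) ^ ((q:ℝ) * ξ - (1 - ξ) / 2) := Real.rpow_pos_of_pos hn0 _
        have hTpos : 0 < T n := sum_pos_of_one_le n hn
        rw [hsplit]
        field_simp
      refine hsqrt.congr' ?_
      filter_upwards [hgrow.eventually_ge_atTop (A + 1),
        hsqrt.eventually (gt_mem_nhds (by linarith : A < A + 1)),
        eventually_ge_atTop 1] with n hg hr hn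
      have hn0 : (0:ℝ) < (n:ℝ) := by exact_mod_cast hn
      have hc : (0:ℝ) ≤ (n:ℝ) ^ ((1 - ξ) / 2) := (Real.rpow_pos_of_pos hn0 _).le
      rw [← min_div_div_right hc, min_eq_left (le_trans (le_of_lt hr) hg)]
  · -- the exponent bound
    intro ξ' h0 h1
    have h2q : (0:ℝ) < 2 * (q:ℝ) + 1 := by linarith
    rcases le_total ξ' (1 / (2 * (q:ℝ) + 1)) with h | h
    · refine (min_le_left _ _).trans ?_
      calc (q:ℝ) * ξ' ≤ (q:ℝ) * (1 / (2 * (q:ℝ) + 1)) := by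
            apply mul_le_mul_of_nonneg_left h (by linarith)
        _ = (q:ℝ) / (2 * (q:ℝ) + 1) := by ring
    · refine (min_le_right _ _).trans ?_
      rw [div_le_div_iff₀ (by norm_num) h2q]
      rw [div_le_iff₀ h2q] at h
      ring_nf at h ⊢
      linarith
  · -- equality at the optimum
    have h2q : (0:ℝ) < 2 * (q:ℝ) + 1 := by positivity
    have e1 : (q:ℝ) * (1 / (2 * (q:ℝ) + 1)) = (q:ℝ) / (2 * (q:ℝ) + 1) := by ring
    have e2 : (1 - 1 / (2 * (q:ℝ) + 1)) / 2 = (q:ℝ) / (2 * (q:ℝ) + 1) := by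
      field_simp; ring
    rw [e1, e2, min_self]
end
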